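/- arXiv:2502.14210 — 6 statements merged into one kernel-verified Lean document; each statement's English description precedes it below -/
import Mathlib

section
/- Let A ∈ ℝ^{n×n}, B ∈ ℝ^{n×m}, Q ∈ ℝ^{n×n} and R ∈ ℝ^{m×m} symmetric positive definite, and suppose P* ≻ 0 satisfies the ARE P* = AᵀP*A − AᵀP*B(R + BᵀP*B)^{-1}BᵀP*A + Q. Set Ā := A − B(R + BᵀP*B)^{-1}BᵀP*A. If P' is a symmetric matrix with P' ⪰ P* and P := Q + Aᵀ(P' − P'B(R + BᵀP'B)^{-1}BᵀP')A is one step of the Riccati recursion applied to P', then 0 ⪯ P − P* ⪯ Āᵀ(P' − P*)Ā (Loewner order). -/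
open Matrix BigOperators MeasureTheory

/-- Spectral norm (operator norm induced by Euclidean norms). -/
noncomputable def sNorm {m n : ℕ} (M : Matrix (Fin m) (Fin n) ℝ) : ℝ :=
  ‖LinearMap.toContinuousLinearMap (Matrix.toEuclideanLin M)‖

/-- Frobenius norm. -/
noncomputable def fNorm {m n : ℕ} (M : Matrix (Fin m) (Fin n) ℝ) : ℝ :=
  Real.sqrt (∑ i, ∑ j, (M i j) ^ 2)

/-- `P`-induced norm: `‖X‖_P = sup_{z ≠ 0} √(zᵀXᵀPXz / zᵀPz)`. -/
noncomputable def pNorm {n : ℕ} (P X : Matrix (Fin n) (Fin n) ℝ) : ℝ :=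
  ⨆ z : {v : Fin n → ℝ // v ≠ 0},
    Real.sqrt ((z.1 ⬝ᵥ (Xᵀ * P * X).mulVec z.1) / (z.1 ⬝ᵥ P.mulVec z.1))

/-- Smallest eigenvalue of a symmetric matrix (as a Rayleigh-quotient infimum). -/
noncomputable def lamMin {n : ℕ} (M : Matrix (Fin n) (Fin n) ℝ) : ℝ :=
  ⨅ v : {v : Fin n → ℝ // v ⬝ᵥ v = 1}, v.1 ⬝ᵥ M.mulVec v.1

/-- Largest eigenvalue of a symmetric matrix (as a Rayleigh-quotient supremum). -/
noncomputable def lamMax {n : ℕ} (M : Matrix (Fin n) (Fin n) ℝ) : ℝ :=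
  ⨆ v : {v : Fin n → ℝ // v ⬝ᵥ v = 1}, v.1 ⬝ᵥ M.mulVec v.1

/-- Condition number `κ_M = λ_max(M)/λ_min(M)`. -/
noncomputable def condNum {n : ℕ} (M : Matrix (Fin n) (Fin n) ℝ) : ℝ :=
  lamMax M / lamMin M

/-- Smallest singular value. -/
noncomputable def sigMin {m n : ℕ} (M : Matrix (Fin m) (Fin n) ℝ) : ℝ :=
  Real.sqrt (lamMin (Mᵀ * M))

/-- Spectral radius: supremum of moduli of (complex) eigenvalues. -/
noncomputable def specRad {n : ℕ} (M : Matrix (Fin n) (Fin n) ℝ) : ℝ :=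
  ⨆ μ : spectrum ℂ (M.map ((↑) : ℝ → ℂ)), ‖μ.1‖


lemma riccati_completion {n m : ℕ}
    (A : Matrix (Fin n) (Fin n) ℝ) (B : Matrix (Fin n) (Fin m) ℝ)
    (Q : Matrix (Fin n) (Fin n) ℝ) (R S : Matrix (Fin m) (Fin m) ℝ)
    (P : Matrix (Fin n) (Fin n) ℝ) (L K : Matrix (Fin m) (Fin n) ℝ)
    (hS : S = R + Bᵀ * P * B)
    (hSL : S * L = Bᵀ * P * A)
    (hLS : Lᵀ * S = Aᵀ * P * B) :
    Q + Aᵀ * P * A - Aᵀ * P * B * L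
      = Q + (A - B * K)ᵀ * P * (A - B * K) + Kᵀ * R * K - (K - L)ᵀ * S * (K - L) := by
  have h1 : Aᵀ * P * B * L = Lᵀ * (Bᵀ * P * A) := by
    rw [← hLS, Matrix.mul_assoc, hSL]
  have h2 : (K - L)ᵀ * S * (K - L)
      = Kᵀ * (S * K) - Kᵀ * (Bᵀ * P * A) - Aᵀ * P * B * K + Lᵀ * (Bᵀ * P * A) := by
    rw [← hSL, ← hLS]
    simp only [Matrix.transpose_sub, Matrix.sub_mul, Matrix.mul_sub, Matrix.mul_assoc]
    abel
  have h3 : Kᵀ * (S * K) = Kᵀ * R * K + Kᵀ * (Bᵀ * P * (B * K)) := by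
    rw [hS]
    simp only [Matrix.add_mul, Matrix.mul_add, Matrix.mul_assoc]
  have h4 : (A - B * K)ᵀ * P * (A - B * K)
      = Aᵀ * P * A - Aᵀ * P * (B * K) - Kᵀ * (Bᵀ * P * A) + Kᵀ * (Bᵀ * P * (B * K)) := by
    simp only [Matrix.transpose_sub, Matrix.transpose_mul, Matrix.sub_mul, Matrix.mul_sub,
      Matrix.mul_assoc]
    abel
  rw [h1, h2, h3, h4]
  simp only [Matrix.mul_assoc]
  abel

/-- One step of the Riccati recursion applied to `P' ⪰ P*` stays above `P*`
and contracts through `Ā`: `0 ⪯ P − P* ⪯ Āᵀ(P' − P*)Ā`. -/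
theorem riccati_step_monotone {n m : ℕ}
    (A : Matrix (Fin n) (Fin n) ℝ) (B : Matrix (Fin n) (Fin m) ℝ)
    (Q : Matrix (Fin n) (Fin n) ℝ) (R : Matrix (Fin m) (Fin m) ℝ)
    (hQ : Q.PosDef) (hR : R.PosDef)
    (Pstar : Matrix (Fin n) (Fin n) ℝ) (hPstar : Pstar.PosDef)
    (hARE : Pstar = Aᵀ * Pstar * A
      - Aᵀ * Pstar * B * (R + Bᵀ * Pstar * B)⁻¹ * Bᵀ * Pstar * A + Q)
    (Abar : Matrix (Fin n) (Fin n) ℝ)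
    (hAbar : Abar = A - B * ((R + Bᵀ * Pstar * B)⁻¹ * (Bᵀ * Pstar * A)))
    (P' : Matrix (Fin n) (Fin n) ℝ) (hP'symm : P'.IsSymm)
    (hP'ge : (P' - Pstar).PosSemidef)
    (P : Matrix (Fin n) (Fin n) ℝ)
    (hP : P = Q + Aᵀ * (P' - P' * B * (R + Bᵀ * P' * B)⁻¹ * Bᵀ * P') * A) :
    (P - Pstar).PosSemidef ∧ (Abarᵀ * (P' - Pstar) * Abar - (P - Pstar)).PosSemidef := by
  -- basic symmetry facts
  have hP'T : P'ᵀ = P' := hP'symm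
  have hPsT : Pstarᵀ = Pstar := by
    have h := hPstar.isHermitian
    rwa [Matrix.IsHermitian, Matrix.conjTranspose_eq_transpose_of_trivial] at h
  have hRT : Rᵀ = R := by
    have h := hR.isHermitian
    rwa [Matrix.IsHermitian, Matrix.conjTranspose_eq_transpose_of_trivial] at h
  have hP'psd : P'.PosSemidef := by
    have := hPstar.posSemidef.add hP'ge
    rwa [add_sub_cancel] at this
  -- opaque names for the two "denominator" matrices
  obtain ⟨S', hS'def⟩ : ∃ S', S' = R + Bᵀ * P' * B := ⟨_, rfl⟩
  obtain ⟨Sst, hSstdef⟩ : ∃ S, S = R + Bᵀ * Pstar * B := ⟨_, rfl⟩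
  rw [← hS'def] at hP
  rw [← hSstdef] at hARE hAbar
  have hS'pd : S'.PosDef := by
    rw [hS'def]
    have h1 : (Bᵀ * P' * B).PosSemidef := by
      have := hP'psd.conjTranspose_mul_mul_same B
      rwa [Matrix.conjTranspose_eq_transpose_of_trivial] at this
    exact hR.add_posSemidef h1
  have hSstpd : Sst.PosDef := by
    rw [hSstdef]
    have h1 : (Bᵀ * Pstar * B).PosSemidef := by
      have := hPstar.posSemidef.conjTranspose_mul_mul_same B
      rwa [Matrix.conjTranspose_eq_transpose_of_trivial] at this
    exact hR.add_posSemidef h1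
  have hS'T : S'ᵀ = S' := by
    rw [hS'def]
    simp only [Matrix.transpose_add, Matrix.transpose_mul, Matrix.transpose_transpose, hP'T, hRT,
      Matrix.mul_assoc]
  have hSstT : Sstᵀ = Sst := by
    rw [hSstdef]
    simp only [Matrix.transpose_add, Matrix.transpose_mul, Matrix.transpose_transpose, hPsT, hRT,
      Matrix.mul_assoc]
  have hS'det : IsUnit S'.det := (Matrix.isUnit_iff_isUnit_det _).mp hS'pd.isUnit
  have hSstdet : IsUnit Sst.det := (Matrix.isUnit_iff_isUnit_det _).mp hSstpd.isUnit
  -- opaque names for the two gains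
  obtain ⟨K', hK'def⟩ : ∃ K, K = S'⁻¹ * (Bᵀ * P' * A) := ⟨_, rfl⟩
  obtain ⟨Kst, hKstdef⟩ : ∃ K, K = Sst⁻¹ * (Bᵀ * Pstar * A) := ⟨_, rfl⟩
  rw [← hKstdef] at hAbar
  have hSL' : S' * K' = Bᵀ * P' * A := by
    rw [hK'def, ← Matrix.mul_assoc, Matrix.mul_nonsing_inv _ hS'det, Matrix.one_mul]
  have hSLst : Sst * Kst = Bᵀ * Pstar * A := by
    rw [hKstdef, ← Matrix.mul_assoc, Matrix.mul_nonsing_inv _ hSstdet, Matrix.one_mul]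
  have hLS' : K'ᵀ * S' = Aᵀ * P' * B := by
    have h := congrArg Matrix.transpose hSL'
    rw [Matrix.transpose_mul, hS'T] at h
    rw [h]
    simp only [Matrix.transpose_mul, Matrix.transpose_transpose, hP'T, Matrix.mul_assoc]
  have hLSst : Kstᵀ * Sst = Aᵀ * Pstar * B := by
    have h := congrArg Matrix.transpose hSLst
    rw [Matrix.transpose_mul, hSstT] at h
    rw [h]
    simp only [Matrix.transpose_mul, Matrix.transpose_transpose, hPsT, Matrix.mul_assoc]
  -- canonical forms of the recursion step and the ARE
  have hPeq : P = Q + Aᵀ * P' * A - Aᵀ * P' * B * K' := by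
    rw [hP, hK'def]
    simp only [Matrix.mul_sub, Matrix.sub_mul, Matrix.mul_assoc]
    abel
  have hAREeq : Pstar = Q + Aᵀ * Pstar * A - Aᵀ * Pstar * B * Kst := by
    conv_lhs => rw [hARE]
    rw [hKstdef]
    simp only [Matrix.mul_sub, Matrix.sub_mul, Matrix.mul_assoc]
    abel
  have key1 := riccati_completion A B Q R S' P' K' K' hS'def hSL' hLS'
  have key2 := riccati_completion A B Q R Sst Pstar Kst K' hSstdef hSLst hLSst
  have key3 := riccati_completion A B Q R S' P' K' Kst hS'def hSL' hLS'
  have key4 := riccati_completion A B Q R Sst Pstar Kst Kst hSstdef hSLst hLSst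
  have E1 := hPeq.trans key1
  have E2 := hAREeq.trans key2
  have E3 := hPeq.trans key3
  have E4 := hAREeq.trans key4
  have D1 : P - Pstar
      = (Q + (A - B * K')ᵀ * P' * (A - B * K') + K'ᵀ * R * K' - (K' - K')ᵀ * S' * (K' - K'))
        - (Q + (A - B * K')ᵀ * Pstar * (A - B * K') + K'ᵀ * R * K'
            - (K' - Kst)ᵀ * Sst * (K' - Kst)) := by rw [E1, ← E2]
  have D2 : P - Pstar
      = (Q + (A - B * Kst)ᵀ * P' * (A - B * Kst) + Kstᵀ * R * Kst
            - (Kst - K')ᵀ * S' * (Kst - K'))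
        - (Q + (A - B * Kst)ᵀ * Pstar * (A - B * Kst) + Kstᵀ * R * Kst
            - (Kst - Kst)ᵀ * Sst * (Kst - Kst)) := by rw [E3, ← E4]
  -- lower bound
  have hlow : P - Pstar
      = (A - B * K')ᵀ * (P' - Pstar) * (A - B * K')
        + (K' - Kst)ᵀ * Sst * (K' - Kst) := by
    rw [D1]
    simp only [sub_self, Matrix.transpose_zero, Matrix.zero_mul, Matrix.mul_zero,
      Matrix.mul_sub, Matrix.sub_mul]
    abel
  -- upper bound
  have hupp : Abarᵀ * (P' - Pstar) * Abar - (P - Pstar)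
      = (Kst - K')ᵀ * S' * (Kst - K') := by
    rw [hAbar, D2]
    simp only [sub_self, Matrix.transpose_zero, Matrix.zero_mul, Matrix.mul_zero,
      Matrix.mul_sub, Matrix.sub_mul]
    abel
  constructor
  · rw [hlow]
    have t1 : ((A - B * K')ᵀ * (P' - Pstar) * (A - B * K')).PosSemidef := by
      have := hP'ge.conjTranspose_mul_mul_same (A - B * K')
      rwa [Matrix.conjTranspose_eq_transpose_of_trivial] at this
    have t2 : ((K' - Kst)ᵀ * Sst * (K' - Kst)).PosSemidef := by
      have := hSstpd.posSemidef.conjTranspose_mul_mul_same (K' - Kst)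
      rwa [Matrix.conjTranspose_eq_transpose_of_trivial] at this
    exact t1.add t2
  · rw [hupp]
    have := hS'pd.posSemidef.conjTranspose_mul_mul_same (Kst - K')
    rwa [Matrix.conjTranspose_eq_transpose_of_trivial] at this
end

section
/- Let Q ∈ ℝ^{n×n}, R ∈ ℝ^{m×m}, and Σ₀ ∈ ℝ^{n×n} be symmetric positive definite, let P̃ ∈ ℝ^{n×n} be symmetric positive semidefinite, and let A ∈ ℝ^{n×n}, B ∈ ℝ^{n×m}. Define J̃(K) := tr((Q + KᵀRK + (A − BK)ᵀP̃(A − BK))Σ₀), ∇J̃(K) := 2((R + BᵀP̃B)K − BᵀP̃A)Σ₀, and K̃* := (R + BᵀP̃B)^{-1}BᵀP̃A. Then K̃* is the global minimizer of J̃, and for all K ∈ ℝ^{m×n}, ‖∇J̃(K)‖_F² ≥ μ·(J̃(K) − J̃(K̃*)), where μ := 4·σ_min(Σ₀)·σ_min(R). -/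
open Matrix BigOperators MeasureTheory

/-- The surrogate cost `J̃(K) = tr((Q + KᵀRK + (A−BK)ᵀP̃(A−BK))Σ₀)`. -/
noncomputable def Jtil {n m : ℕ} (A Q Ptil Sigma0 : Matrix (Fin n) (Fin n) ℝ)
    (B : Matrix (Fin n) (Fin m) ℝ) (R : Matrix (Fin m) (Fin m) ℝ)
    (K : Matrix (Fin m) (Fin n) ℝ) : ℝ :=
  ((Q + Kᵀ * R * K + (A - B * K)ᵀ * Ptil * (A - B * K)) * Sigma0).trace


section PLhelpers
variable {k l : ℕ}

private lemma psd_trace_nonneg {X : Matrix (Fin k) (Fin k) ℝ} (hX : X.PosSemidef) :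
    0 ≤ X.trace := by
  rw [Matrix.trace]
  refine Finset.sum_nonneg fun i _ => ?_
  have := hX.dotProduct_mulVec_nonneg (Pi.single i 1)
  simpa [Matrix.mulVec, dotProduct, Pi.single_apply] using this

private lemma trace_mul_psd_nonneg {X Y : Matrix (Fin k) (Fin k) ℝ}
    (hX : X.PosSemidef) (hY : Y.PosSemidef) : 0 ≤ (X * Y).trace := by
  open scoped MatrixOrder in obtain ⟨C, rfl⟩ := CStarAlgebra.nonneg_iff_eq_star_mul_self.mp hX.nonneg
  rw [Matrix.star_eq_conjTranspose]
  rw [Matrix.mul_assoc, Matrix.trace_mul_comm]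
  exact psd_trace_nonneg (hY.mul_mul_conjTranspose_same C)

private lemma psd_conj {S : Matrix (Fin k) (Fin k) ℝ} (hS : S.PosSemidef)
    (D : Matrix (Fin k) (Fin l) ℝ) : (Dᵀ * S * D).PosSemidef := by
  have := hS.conjTranspose_mul_mul_same D
  rwa [Matrix.conjTranspose_eq_transpose_of_trivial] at this

private lemma rayleigh_bddBelow {M : Matrix (Fin k) (Fin k) ℝ} (hM : M.PosSemidef) :
    BddBelow (Set.range fun v : {v : Fin k → ℝ // v ⬝ᵥ v = 1} => v.1 ⬝ᵥ M.mulVec v.1) := by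
  refine ⟨0, ?_⟩
  rintro x ⟨w, rfl⟩
  simpa using hM.dotProduct_mulVec_nonneg w.1

private lemma lamMin_le_rayleigh {M : Matrix (Fin k) (Fin k) ℝ} (hM : M.PosSemidef)
    (v : Fin k → ℝ) (hv : v ⬝ᵥ v = 1) : lamMin M ≤ v ⬝ᵥ M.mulVec v :=
  ciInf_le (rayleigh_bddBelow hM) (⟨v, hv⟩ : {v : Fin k → ℝ // v ⬝ᵥ v = 1})

private lemma lamMin_nonneg {M : Matrix (Fin k) (Fin k) ℝ} (hM : M.PosSemidef) :
    0 ≤ lamMin M :=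
  Real.iInf_nonneg fun v => by simpa using hM.dotProduct_mulVec_nonneg v.1

private lemma rayleigh_lower {M : Matrix (Fin k) (Fin k) ℝ} (hM : M.PosSemidef)
    (v : Fin k → ℝ) : lamMin M * (v ⬝ᵥ v) ≤ v ⬝ᵥ M.mulVec v := by
  by_cases hv : v = 0
  · simp [hv]
  · have hc : 0 < v ⬝ᵥ v := by
      have h2 : v ⬝ᵥ v = ∑ i, v i ^ 2 := by simp [dotProduct, pow_two]
      rw [h2]
      have : ∃ i, v i ≠ 0 := by
        by_contra h
        push_neg at h
        exact hv (funext fun i => h i)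
      obtain ⟨i, hi⟩ := this
      exact Finset.sum_pos' (fun j _ => sq_nonneg _) ⟨i, Finset.mem_univ i, by positivity⟩
    set c := v ⬝ᵥ v with hcdef
    set u : Fin k → ℝ := (Real.sqrt c)⁻¹ • v with hu
    have hsc : Real.sqrt c > 0 := Real.sqrt_pos.2 hc
    have huu : u ⬝ᵥ u = 1 := by
      rw [hu, smul_dotProduct, dotProduct_smul, smul_eq_mul, smul_eq_mul, ← mul_assoc,
        ← Real.sqrt_inv]
      rw [← hcdef, Real.mul_self_sqrt (by positivity)]
      field_simp
    have h1 : lamMin M ≤ u ⬝ᵥ M.mulVec u := lamMin_le_rayleigh hM u huu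
    have h2 : u ⬝ᵥ M.mulVec u = c⁻¹ * (v ⬝ᵥ M.mulVec v) := by
      rw [hu, smul_dotProduct, Matrix.mulVec_smul, dotProduct_smul, smul_eq_mul, smul_eq_mul,
        ← mul_assoc]
      congr 1
      rw [← Real.sqrt_inv, Real.mul_self_sqrt (by positivity)]
    rw [h2] at h1
    calc lamMin M * c ≤ (c⁻¹ * (v ⬝ᵥ M.mulVec v)) * c :=
          mul_le_mul_of_nonneg_right h1 hc.le
      _ = v ⬝ᵥ M.mulVec v := by field_simp

private lemma sq_sub_smul_psd {M : Matrix (Fin k) (Fin k) ℝ} (hM : M.PosSemidef) {c : ℝ}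
    (hc0 : 0 ≤ c) (hc : ∀ v : Fin k → ℝ, c * (v ⬝ᵥ v) ≤ v ⬝ᵥ M.mulVec v) :
    (M * M - c • M).PosSemidef := by
  have hMt : Mᵀ = M := by
    have := hM.1
    rwa [Matrix.IsHermitian, Matrix.conjTranspose_eq_transpose_of_trivial] at this
  refine Matrix.PosSemidef.of_dotProduct_mulVec_nonneg ?_ ?_
  · rw [Matrix.IsHermitian, Matrix.conjTranspose_sub, Matrix.conjTranspose_smul,
      Matrix.conjTranspose_mul, Matrix.conjTranspose_eq_transpose_of_trivial]
    simp [hMt]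
  · intro x
    have hxw : x ⬝ᵥ (M * M).mulVec x = (M.mulVec x) ⬝ᵥ (M.mulVec x) := by
      rw [← Matrix.mulVec_mulVec, Matrix.dotProduct_mulVec, ← Matrix.mulVec_transpose, hMt]
    set w := M.mulVec x with hw
    have hCS : (x ⬝ᵥ w) ^ 2 ≤ (x ⬝ᵥ x) * (w ⬝ᵥ w) := by
      have := Finset.sum_mul_sq_le_sq_mul_sq Finset.univ x w
      simpa [dotProduct, pow_two] using this
    have hb : c * (x ⬝ᵥ x) ≤ x ⬝ᵥ w := hc x
    have ha : 0 ≤ x ⬝ᵥ x := by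
      simpa [dotProduct, pow_two] using
        Finset.sum_nonneg (fun i (_ : i ∈ Finset.univ) => sq_nonneg (x i))
    have hd : 0 ≤ w ⬝ᵥ w := by
      simpa [dotProduct, pow_two] using
        Finset.sum_nonneg (fun i (_ : i ∈ Finset.univ) => sq_nonneg (w i))
    have hgoal : c * (x ⬝ᵥ w) ≤ w ⬝ᵥ w := by
      rcases eq_or_lt_of_le ha with h0 | hpos
      · have hb0 : (x ⬝ᵥ w) ^ 2 ≤ 0 := by nlinarith
        have : x ⬝ᵥ w = 0 := by nlinarith [sq_nonneg (x ⬝ᵥ w)]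
        rw [this]; simpa using hd
      · nlinarith [mul_le_mul_of_nonneg_right hb (le_trans (by positivity) hb)]
    simp only [Matrix.sub_mulVec, Matrix.smul_mulVec, dotProduct_sub, dotProduct_smul,
      star_trivial, smul_eq_mul, hxw]
    linarith

private lemma sigMin_le_lamMin {M : Matrix (Fin k) (Fin k) ℝ} (hM : M.PosSemidef) :
    sigMin M ≤ lamMin M := by
  classical
  rcases Nat.eq_zero_or_pos k with hk | hk
  · subst hk
    have he : IsEmpty {v : Fin 0 → ℝ // v ⬝ᵥ v = 1} := by
      constructor; rintro ⟨v, hv⟩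
      simp [dotProduct] at hv
    have h1 : lamMin (Mᵀ * M) = 0 := by
      rw [lamMin, @Real.iInf_of_isEmpty _ he]
    have h2 : lamMin M = 0 := by
      rw [lamMin, @Real.iInf_of_isEmpty _ he]
    rw [sigMin, h1, h2, Real.sqrt_zero]
  · have hH : M.IsHermitian := hM.1
    obtain ⟨i₀, -, hmin⟩ := Finset.exists_min_image Finset.univ hH.eigenvalues
      ⟨⟨0, hk⟩, Finset.mem_univ _⟩
    set lam := hH.eigenvalues i₀ with hlam
    have hlam0 : 0 ≤ lam := hM.eigenvalues_nonneg i₀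
    set b := hH.eigenvectorBasis with hb
    have hinner : ∀ x y : EuclideanSpace ℝ (Fin k),
        (inner ℝ x y : ℝ) = (x : Fin k → ℝ) ⬝ᵥ (y : Fin k → ℝ) := fun x y => by
      simp [PiLp.inner_apply, dotProduct, mul_comm]
    have hMt : Mᵀ = M := by
      have := hH
      rwa [Matrix.IsHermitian, Matrix.conjTranspose_eq_transpose_of_trivial] at this
    set u : Fin k → ℝ := ⇑(b i₀) with hu
    have huu : u ⬝ᵥ u = 1 := by
      have h1 : (inner ℝ (b i₀) (b i₀) : ℝ) = 1 := by
        rw [real_inner_self_eq_norm_sq]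
        simp [b.orthonormal.1 i₀]
      rw [← hinner]
      exact h1
    have heig : M.mulVec u = lam • u := hH.mulVec_eigenvectorBasis i₀
    have ha : sigMin M ≤ lam := by
      have hpsd : (Mᵀ * M).PosSemidef := by
        have := Matrix.posSemidef_conjTranspose_mul_self M
        rwa [Matrix.conjTranspose_eq_transpose_of_trivial] at this
      have h1 : lamMin (Mᵀ * M) ≤ u ⬝ᵥ (Mᵀ * M).mulVec u :=
        ciInf_le (rayleigh_bddBelow hpsd) (⟨u, huu⟩ : {v : Fin k → ℝ // v ⬝ᵥ v = 1})
      have h2 : u ⬝ᵥ (Mᵀ * M).mulVec u = lam ^ 2 := by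
        rw [← Matrix.mulVec_mulVec, Matrix.dotProduct_mulVec, ← Matrix.mulVec_transpose,
          Matrix.transpose_transpose, heig]
        rw [smul_dotProduct, dotProduct_smul, smul_eq_mul, smul_eq_mul, huu]
        ring
      rw [sigMin]
      calc Real.sqrt (lamMin (Mᵀ * M)) ≤ Real.sqrt (lam ^ 2) :=
            Real.sqrt_le_sqrt (h2 ▸ h1)
        _ = lam := by rw [Real.sqrt_sq hlam0]
    have hbnd : lam ≤ lamMin M := by
      have : Nonempty {v : Fin k → ℝ // v ⬝ᵥ v = 1} := ⟨⟨u, huu⟩⟩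
      refine le_ciInf fun w => ?_
      obtain ⟨v, hv⟩ := w
      have hexp : v ⬝ᵥ M.mulVec v
          = ∑ i, hH.eigenvalues i * ((v ⬝ᵥ ⇑(b i)) * (v ⬝ᵥ ⇑(b i))) := by
        have h1 := b.sum_inner_mul_inner (𝕜 := ℝ)
          (WithLp.toLp 2 v : EuclideanSpace ℝ (Fin k)) (WithLp.toLp 2 (M.mulVec v) : EuclideanSpace ℝ (Fin k))
        simp only [hinner, WithLp.ofLp_toLp] at h1
        have h2 : ∀ i, (⇑(b i) : Fin k → ℝ) ⬝ᵥ M.mulVec v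
            = hH.eigenvalues i * (v ⬝ᵥ ⇑(b i)) := by
          intro i
          rw [Matrix.dotProduct_mulVec, ← Matrix.mulVec_transpose, hMt,
            hH.mulVec_eigenvectorBasis i, smul_dotProduct, smul_eq_mul, dotProduct_comm]
        calc v ⬝ᵥ M.mulVec v
            = ∑ i, (v ⬝ᵥ ⇑(b i)) * (⇑(b i) ⬝ᵥ M.mulVec v) := h1.symm
          _ = ∑ i, hH.eigenvalues i * ((v ⬝ᵥ ⇑(b i)) * (v ⬝ᵥ ⇑(b i))) := by
              refine Finset.sum_congr rfl fun i _ => ?_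
              rw [h2 i]; ring
      have hexp2 : (1:ℝ) = ∑ i, (v ⬝ᵥ ⇑(b i)) * (v ⬝ᵥ ⇑(b i)) := by
        have h1 := b.sum_inner_mul_inner (𝕜 := ℝ)
          (WithLp.toLp 2 v : EuclideanSpace ℝ (Fin k)) (WithLp.toLp 2 v : EuclideanSpace ℝ (Fin k))
        simp only [hinner, WithLp.ofLp_toLp] at h1
        calc (1:ℝ) = v ⬝ᵥ v := hv.symm
          _ = ∑ i, (v ⬝ᵥ ⇑(b i)) * (⇑(b i) ⬝ᵥ v) := h1.symm
          _ = ∑ i, (v ⬝ᵥ ⇑(b i)) * (v ⬝ᵥ ⇑(b i)) := by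
              refine Finset.sum_congr rfl fun i _ => ?_
              rw [dotProduct_comm (⇑(b i)) v]
      calc lam = lam * 1 := by ring
        _ = ∑ i, lam * ((v ⬝ᵥ ⇑(b i)) * (v ⬝ᵥ ⇑(b i))) := by
            rw [hexp2, Finset.mul_sum]
        _ ≤ ∑ i, hH.eigenvalues i * ((v ⬝ᵥ ⇑(b i)) * (v ⬝ᵥ ⇑(b i))) := by
            refine Finset.sum_le_sum fun i _ => ?_
            exact mul_le_mul_of_nonneg_right (hmin i (Finset.mem_univ i)) (mul_self_nonneg _)
        _ = v ⬝ᵥ M.mulVec v := hexp.symm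
    exact le_trans ha hbnd

private lemma fNorm_sq {X : Matrix (Fin k) (Fin l) ℝ} :
    fNorm X ^ 2 = (Xᵀ * X).trace := by
  rw [fNorm, Real.sq_sqrt (by positivity)]
  rw [Matrix.trace]
  rw [Finset.sum_comm]
  refine Finset.sum_congr rfl fun j _ => ?_
  simp [Matrix.mul_apply, Matrix.diag, dotProduct, pow_two]

end PLhelpers

/-- Global minimizer and PL inequality for the surrogate cost. -/
theorem surrogate_cost_PL {n m : ℕ}
    (A Q Ptil Sigma0 : Matrix (Fin n) (Fin n) ℝ) (B : Matrix (Fin n) (Fin m) ℝ)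
    (R : Matrix (Fin m) (Fin m) ℝ)
    (hQ : Q.PosDef) (hR : R.PosDef) (hSigma0 : Sigma0.PosDef)
    (hPtil : Ptil.PosSemidef)
    (Kts : Matrix (Fin m) (Fin n) ℝ)
    (hKts : Kts = (R + Bᵀ * Ptil * B)⁻¹ * (Bᵀ * Ptil * A)) :
    (∀ K : Matrix (Fin m) (Fin n) ℝ,
        Jtil A Q Ptil Sigma0 B R Kts ≤ Jtil A Q Ptil Sigma0 B R K) ∧
      (∀ K : Matrix (Fin m) (Fin n) ℝ,
        fNorm ((2 : ℝ) • (((R + Bᵀ * Ptil * B) * K - Bᵀ * Ptil * A) * Sigma0)) ^ 2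
          ≥ (4 * sigMin Sigma0 * sigMin R)
            * (Jtil A Q Ptil Sigma0 B R K - Jtil A Q Ptil Sigma0 B R Kts)) :=  by
  classical
  have hBPB : (Bᵀ * Ptil * B).PosSemidef := psd_conj hPtil B
  set S : Matrix (Fin m) (Fin m) ℝ := R + Bᵀ * Ptil * B with hSdef
  have hSpd : S.PosDef := hR.add_posSemidef hBPB
  have hSpsd : S.PosSemidef := hSpd.posSemidef
  have hRpsd : R.PosSemidef := hR.posSemidef
  have hSigpsd : Sigma0.PosSemidef := hSigma0.posSemidef
  have hRt : Rᵀ = R := by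
    have := hR.1
    rwa [Matrix.IsHermitian, Matrix.conjTranspose_eq_transpose_of_trivial] at this
  have hPt : Ptilᵀ = Ptil := by
    have := hPtil.1
    rwa [Matrix.IsHermitian, Matrix.conjTranspose_eq_transpose_of_trivial] at this
  have hSigt : Sigma0ᵀ = Sigma0 := by
    have := hSigma0.1
    rwa [Matrix.IsHermitian, Matrix.conjTranspose_eq_transpose_of_trivial] at this
  have hSt : Sᵀ = S := by
    have := hSpd.1
    rwa [Matrix.IsHermitian, Matrix.conjTranspose_eq_transpose_of_trivial] at this
  have hSK : S * Kts = Bᵀ * Ptil * A := by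
    rw [hKts, ← Matrix.mul_assoc,
      Matrix.mul_nonsing_inv _ ((Matrix.isUnit_iff_isUnit_det S).mp hSpd.isUnit),
      Matrix.one_mul]
  have key : ∀ K : Matrix (Fin m) (Fin n) ℝ,
      Q + Kᵀ * R * K + (A - B * K)ᵀ * Ptil * (A - B * K) =
        (K - Kts)ᵀ * S * (K - Kts) +
          (Q + Ktsᵀ * R * Kts + (A - B * Kts)ᵀ * Ptil * (A - B * Kts)) := by
    intro K
    have h1 : Bᵀ * (Ptil * A) = R * Kts + Bᵀ * (Ptil * (B * Kts)) := by
      have := hSK.symm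
      rw [hSdef] at this
      simp only [Matrix.add_mul, Matrix.mul_assoc] at this
      exact this
    have h2 : ∀ X : Matrix (Fin m) (Fin n) ℝ,
        Aᵀ * (Ptil * (B * X)) = Ktsᵀ * (R * X) + Ktsᵀ * (Bᵀ * (Ptil * (B * X))) := by
      intro X
      have h := congrArg Matrix.transpose h1
      simp only [Matrix.transpose_mul, Matrix.transpose_add, Matrix.transpose_transpose,
        hRt, hPt] at h
      have h' := congrArg (fun Y => Y * X) h
      simp only [Matrix.add_mul, Matrix.mul_assoc] at h'
      exact h'
    rw [hSdef]
    simp only [Matrix.transpose_sub, Matrix.transpose_mul, Matrix.sub_mul, Matrix.mul_sub,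
      Matrix.add_mul, Matrix.mul_add, Matrix.mul_assoc]
    rw [h2 K, h2 Kts, h1]
    simp only [Matrix.mul_add, Matrix.add_mul, Matrix.mul_assoc, Matrix.mul_sub,
      Matrix.sub_mul]
    abel
  have Jdiff : ∀ K : Matrix (Fin m) (Fin n) ℝ,
      Jtil A Q Ptil Sigma0 B R K - Jtil A Q Ptil Sigma0 B R Kts
        = ((K - Kts)ᵀ * S * (K - Kts) * Sigma0).trace := by
    intro K
    simp only [Jtil]
    rw [key K, Matrix.add_mul, Matrix.trace_add]
    ring
  have hpsd3 : ∀ K : Matrix (Fin m) (Fin n) ℝ,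
      0 ≤ ((K - Kts)ᵀ * S * (K - Kts) * Sigma0).trace := fun K =>
    trace_mul_psd_nonneg (psd_conj hSpsd (K - Kts)) hSigpsd
  constructor
  · intro K
    have h1 := Jdiff K
    have h2 := hpsd3 K
    linarith
  · intro K
    have hSig2psd : (Sigma0 * Sigma0).PosSemidef := by
      have := Matrix.posSemidef_conjTranspose_mul_self Sigma0
      rwa [Matrix.conjTranspose_eq_transpose_of_trivial, hSigt] at this
    set Δ : Matrix (Fin m) (Fin n) ℝ := K - Kts with hΔ
    have hgrad : (S * K - Bᵀ * Ptil * A) * Sigma0 = S * Δ * Sigma0 := by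
      rw [← hSK, ← Matrix.mul_sub]
    rw [hgrad]
    have hfn : fNorm ((2 : ℝ) • (S * Δ * Sigma0)) ^ 2
        = 4 * ((S * Δ * Sigma0)ᵀ * (S * Δ * Sigma0)).trace := by
      rw [fNorm_sq, Matrix.transpose_smul, Matrix.smul_mul, Matrix.mul_smul,
        Matrix.trace_smul, Matrix.trace_smul]
      simp [smul_eq_mul]
      ring
    have ht1 : ((S * Δ * Sigma0)ᵀ * (S * Δ * Sigma0)).trace
        = (Δᵀ * (S * S) * Δ * (Sigma0 * Sigma0)).trace := by
      have e1 : (S * Δ * Sigma0)ᵀ * (S * Δ * Sigma0)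
          = Sigma0 * (Δᵀ * (S * S) * Δ * Sigma0) := by
        simp only [Matrix.transpose_mul, hSt, hSigt, Matrix.mul_assoc]
      rw [e1, Matrix.trace_mul_comm]
      congr 1
      simp only [Matrix.mul_assoc]
    have hcS : ∀ v : Fin m → ℝ, lamMin R * (v ⬝ᵥ v) ≤ v ⬝ᵥ S.mulVec v := by
      intro v
      have h1 := rayleigh_lower hRpsd v
      have h2 : 0 ≤ v ⬝ᵥ (Bᵀ * Ptil * B).mulVec v := by simpa using hBPB.dotProduct_mulVec_nonneg v
      have h3 : v ⬝ᵥ S.mulVec v = v ⬝ᵥ R.mulVec v + v ⬝ᵥ (Bᵀ * Ptil * B).mulVec v := by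
        rw [hSdef, Matrix.add_mulVec, dotProduct_add]
      linarith
    have hpsdS2 : (S * S - lamMin R • S).PosSemidef :=
      sq_sub_smul_psd hSpsd (lamMin_nonneg hRpsd) hcS
    have hpsdSig2 : (Sigma0 * Sigma0 - lamMin Sigma0 • Sigma0).PosSemidef :=
      sq_sub_smul_psd hSigpsd (lamMin_nonneg hSigpsd) (rayleigh_lower hSigpsd)
    set t1 : ℝ := (Δᵀ * (S * S) * Δ * (Sigma0 * Sigma0)).trace with ht1def
    set t2 : ℝ := (Δᵀ * S * Δ * (Sigma0 * Sigma0)).trace with ht2def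
    set t3 : ℝ := (Δᵀ * S * Δ * Sigma0).trace with ht3def
    have ineq1 : lamMin R * t2 ≤ t1 := by
      have h := trace_mul_psd_nonneg (psd_conj hpsdS2 Δ) hSig2psd
      have e : Δᵀ * (S * S - lamMin R • S) * Δ * (Sigma0 * Sigma0)
          = Δᵀ * (S * S) * Δ * (Sigma0 * Sigma0)
            - lamMin R • (Δᵀ * S * Δ * (Sigma0 * Sigma0)) := by
        simp only [Matrix.mul_sub, Matrix.sub_mul, Matrix.smul_mul, Matrix.mul_smul]
      rw [e, Matrix.trace_sub, Matrix.trace_smul, smul_eq_mul] at h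
      rw [← ht1def, ← ht2def] at h
      linarith
    have ineq2 : lamMin Sigma0 * t3 ≤ t2 := by
      have h := trace_mul_psd_nonneg (psd_conj hSpsd Δ) hpsdSig2
      have e : Δᵀ * S * Δ * (Sigma0 * Sigma0 - lamMin Sigma0 • Sigma0)
          = Δᵀ * S * Δ * (Sigma0 * Sigma0) - lamMin Sigma0 • (Δᵀ * S * Δ * Sigma0) := by
        simp only [Matrix.mul_sub, Matrix.mul_smul]
      rw [e, Matrix.trace_sub, Matrix.trace_smul, smul_eq_mul] at h
      rw [← ht2def, ← ht3def] at h
      linarith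
    have ht3nn : 0 ≤ t3 := hpsd3 K
    have hsR : sigMin R ≤ lamMin R := sigMin_le_lamMin hRpsd
    have hsSig : sigMin Sigma0 ≤ lamMin Sigma0 := sigMin_le_lamMin hSigpsd
    have hsRnn : 0 ≤ sigMin R := Real.sqrt_nonneg _
    have hsSignn : 0 ≤ sigMin Sigma0 := Real.sqrt_nonneg _
    have A1 : sigMin Sigma0 * sigMin R ≤ lamMin Sigma0 * lamMin R :=
      mul_le_mul hsSig hsR hsRnn (lamMin_nonneg hSigpsd)
    have A2 : sigMin Sigma0 * sigMin R * t3 ≤ lamMin Sigma0 * lamMin R * t3 :=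
      mul_le_mul_of_nonneg_right A1 ht3nn
    have A4 : lamMin R * (lamMin Sigma0 * t3) ≤ lamMin R * t2 :=
      mul_le_mul_of_nonneg_left ineq2 (lamMin_nonneg hRpsd)
    have ht3' : ((K - Kts)ᵀ * S * (K - Kts) * Sigma0).trace = t3 := by
      rw [ht3def, hΔ]
    rw [ge_iff_le, Jdiff K, hfn, ht1, ht3']
    nlinarith [A2, A4, ineq1]
end

section
/- Let E be a real inner product space, f : E → ℝ differentiable with gradient ∇f, and suppose: (i) (L-smoothness) f(y) ≤ f(x) + ⟨∇f(x), y − x⟩ + (L/2)‖y − x‖² for all x, y ∈ E; (ii) (PL inequality) there is f* ∈ ℝ with ‖∇f(x)‖² ≥ μ(f(x) − f*) for all x ∈ E, where μ, L > 0. Let (Ω, ℱ, ℙ) be a probability space, K ∈ E fixed, and g : Ω → E an integrable random vector with 𝔼[g] = ∇f(K) and 𝔼[‖g‖²] ≤ ξ. Then for any step-size α > 0, 𝔼[f(K − αg)] − f* ≤ (1 − μα)(f(K) − f*) + (L/2)α²ξ. -/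
open MeasureTheory
open scoped RealInnerProductSpace

/-- One-step descent recursion for stochastic gradient descent under
`L`-smoothness and the PL inequality, with an unbiased gradient estimate of bounded
second moment. -/
theorem sgd_one_step_descent {E : Type*} [NormedAddCommGroup E]
    [InnerProductSpace ℝ E] [CompleteSpace E]
    (f : E → ℝ) (gradf : E → E) (hdiff : ∀ x, HasGradientAt f (gradf x) x)
    (L μ fstar : ℝ) (hL : 0 < L) (hμ : 0 < μ)
    (hsmooth : ∀ x y : E, f y ≤ f x + ⟪gradf x, y - x⟫ + L / 2 * ‖y - x‖ ^ 2)
    (hPL : ∀ x : E, ‖gradf x‖ ^ 2 ≥ μ * (f x - fstar))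
    {Ω : Type*} [MeasurableSpace Ω] (ℙ : Measure Ω) [IsProbabilityMeasure ℙ]
    (K : E) (g : Ω → E)
    (hg_int : Integrable g ℙ)
    (hg_mean : ∫ ω, g ω ∂ℙ = gradf K)
    (hg_sq_int : Integrable (fun ω => ‖g ω‖ ^ 2) ℙ)
    (ξ : ℝ) (hg_sq : ∫ ω, ‖g ω‖ ^ 2 ∂ℙ ≤ ξ)
    (α : ℝ) (hα : 0 < α)
    (hf_int : Integrable (fun ω => f (K - α • g ω)) ℙ) :
    (∫ ω, f (K - α • g ω) ∂ℙ) - fstar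
      ≤ (1 - μ * α) * (f K - fstar) + L / 2 * α ^ 2 * ξ := by
  set v := gradf K with hv
  have hpt : ∀ ω, f (K - α • g ω) ≤ f K - α * ⟪v, g ω⟫ + L / 2 * α ^ 2 * ‖g ω‖ ^ 2 := by
    intro ω
    have h := hsmooth K (K - α • g ω)
    have he : K - α • g ω - K = -(α • g ω) := by abel
    rw [he, inner_neg_right, real_inner_smul_right, norm_neg, norm_smul] at h
    have : (‖α‖ * ‖g ω‖) ^ 2 = α ^ 2 * ‖g ω‖ ^ 2 := by
      rw [mul_pow]; rw [Real.norm_eq_abs, sq_abs]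
    rw [this] at h
    calc f (K - α • g ω) ≤ f K + -(α * ⟪v, g ω⟫) + L / 2 * (α ^ 2 * ‖g ω‖ ^ 2) := h
      _ = f K - α * ⟪v, g ω⟫ + L / 2 * α ^ 2 * ‖g ω‖ ^ 2 := by ring
  have hinner_int : Integrable (fun ω => ⟪v, g ω⟫) ℙ := hg_int.const_inner v
  have hRHS_int : Integrable (fun ω => f K - α * ⟪v, g ω⟫ + L / 2 * α ^ 2 * ‖g ω‖ ^ 2) ℙ :=
    ((integrable_const (f K)).sub (hinner_int.const_mul α)).add
      (hg_sq_int.const_mul (L / 2 * α ^ 2))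
  have hmono : ∫ ω, f (K - α • g ω) ∂ℙ
      ≤ ∫ ω, (f K - α * ⟪v, g ω⟫ + L / 2 * α ^ 2 * ‖g ω‖ ^ 2) ∂ℙ :=
    integral_mono hf_int hRHS_int hpt
  have hint_inner : ∫ ω, ⟪v, g ω⟫ ∂ℙ = ‖v‖ ^ 2 := by
    rw [integral_inner hg_int, hg_mean, real_inner_self_eq_norm_sq]
  have hi1 : Integrable (fun ω => f K - α * ⟪v, g ω⟫) ℙ :=
    (integrable_const (f K)).sub (hinner_int.const_mul α)
  have hi2 : Integrable (fun ω => L / 2 * α ^ 2 * ‖g ω‖ ^ 2) ℙ :=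
    hg_sq_int.const_mul (L / 2 * α ^ 2)
  have hic : Integrable (fun _ : Ω => f K) ℙ := integrable_const (f K)
  have him : Integrable (fun ω => α * ⟪v, g ω⟫) ℙ := hinner_int.const_mul α
  have hsplit : ∫ ω, (f K - α * ⟪v, g ω⟫ + L / 2 * α ^ 2 * ‖g ω‖ ^ 2) ∂ℙ
      = f K - α * ‖v‖ ^ 2 + L / 2 * α ^ 2 * ∫ ω, ‖g ω‖ ^ 2 ∂ℙ := by
    rw [integral_add hi1 hi2, integral_sub hic him,
      integral_const, integral_const_mul, integral_const_mul, hint_inner]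
    simp
  rw [hsplit] at hmono
  have hPLK := hPL K
  have hsq : L / 2 * α ^ 2 * ∫ ω, ‖g ω‖ ^ 2 ∂ℙ ≤ L / 2 * α ^ 2 * ξ := by
    apply mul_le_mul_of_nonneg_left hg_sq
    positivity
  nlinarith [hmono, hPLK, hα.le]
end

section
/- Let θ ≥ 2 and J₀ > 0 be real numbers, c ≥ 0 with θ·J₀ ≥ c, and let (a_t)_{t∈ℕ} be a sequence of nonnegative reals with a₀ ≤ J₀ and, for all t ∈ ℕ, a_{t+1} ≤ (1 − 2/(t + θ))·a_t + c/(t + θ)². Then for all t ∈ ℕ, a_t ≤ θ·J₀/(t + θ). -/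
/-- Deterministic recursion bound behind the inner-loop induction:
if `a₀ ≤ J₀` and `a_{t+1} ≤ (1 − 2/(t+θ))·a_t + c/(t+θ)²` with `θ ≥ 2`, `c ≤ θ·J₀`,
then `a_t ≤ θ·J₀/(t+θ)` for all `t`. -/
theorem recursion_decay (θ J₀ c : ℝ) (hθ : 2 ≤ θ) (hJ₀ : 0 < J₀)
    (hc : 0 ≤ c) (hcJ : c ≤ θ * J₀)
    (a : ℕ → ℝ) (hnonneg : ∀ t, 0 ≤ a t) (ha0 : a 0 ≤ J₀)
    (hrec : ∀ t : ℕ, a (t + 1) ≤ (1 - 2 / ((t : ℝ) + θ)) * a t + c / ((t : ℝ) + θ) ^ 2) :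
    ∀ t : ℕ, a t ≤ θ * J₀ / ((t : ℝ) + θ) := by
  intro t
  induction t with
  | zero =>
    simp only [Nat.cast_zero, zero_add]
    rw [le_div_iff₀ (by linarith : (0:ℝ) < θ)]
    nlinarith [hnonneg 0]
  | succ t ih =>
    have hs : (2:ℝ) ≤ (t : ℝ) + θ := by
      have : (0:ℝ) ≤ (t : ℝ) := Nat.cast_nonneg t
      linarith
    have hspos : (0:ℝ) < (t : ℝ) + θ := by linarith
    have hcoef : (0:ℝ) ≤ 1 - 2 / ((t : ℝ) + θ) := by
      rw [sub_nonneg, div_le_one hspos]; linarith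
    have h1 : a (t + 1) ≤ (1 - 2 / ((t : ℝ) + θ)) * (θ * J₀ / ((t : ℝ) + θ)) + c / ((t : ℝ) + θ) ^ 2 :=
      (hrec t).trans (by gcongr)
    have hkey : (1 - 2 / ((t : ℝ) + θ)) * (θ * J₀ / ((t : ℝ) + θ)) + c / ((t : ℝ) + θ) ^ 2
        ≤ θ * J₀ / ((t : ℝ) + 1 + θ) := by
      have heq : (1 - 2 / ((t : ℝ) + θ)) * (θ * J₀ / ((t : ℝ) + θ)) + c / ((t : ℝ) + θ) ^ 2
          = (((t : ℝ) + θ - 2) * (θ * J₀) + c) / ((t : ℝ) + θ) ^ 2 := by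
        field_simp
      rw [heq, div_le_div_iff₀ (by positivity) (by linarith)]
      have hM : (0:ℝ) < θ * J₀ := by nlinarith
      nlinarith [mul_pos hspos hspos]
    push_cast
    linarith
end

section
/- Let (Ω, ℱ, ℙ) be a probability space with a filtration (ℱ_t)_{t∈ℕ}, and let (Δ_t)_{t∈ℕ} be a nonnegative, integrable process adapted to (ℱ_t). Fix reals J₀ > 0, 0 < ζ < 1, θ ≥ 2, and c ≥ 0 with θ·J₀ ≥ c. Define the stopping time τ := min{t : Δ_t > 10ζ^{-1}J₀}. Assume Δ₀ ≤ J₀ almost surely, and that for every t ∈ ℕ, 𝔼[Δ_{t+1} | ℱ_t]·𝟙_{τ > t} ≤ ((1 − 2/(t + θ))·Δ_t + c/(t + θ)²)·𝟙_{τ > t} almost surely. Then for every T ∈ ℕ with T ≥ 1: (a) 𝔼[Δ_T·𝟙_{τ > T}] ≤ θ·J₀/(T + θ), and (b) ℙ(τ ≤ T) ≤ (3/10)·ζ. -/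
open MeasureTheory Finset

/-- Proposition: probabilistic optimality-gap guarantee.
Here `A t = {ω | ∀ s ≤ t, Δ_s ω ≤ 10ζ⁻¹J₀}` is the event `{τ > t}` for the stopping
time `τ = min{t : Δ_t > 10ζ⁻¹J₀}`, so `(A T)ᶜ = {τ ≤ T}`, the set integral over `A T`
is `𝔼[Δ_T·𝟙_{τ>T}]`, and the conditional-expectation hypothesis is the descent
recursion multiplied by `𝟙_{τ>t}`. -/
theorem stopped_supermartingale_bound {Ω : Type*} {m0 : MeasurableSpace Ω}
    (ℙ : Measure Ω) [IsProbabilityMeasure ℙ]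
    (ℱ : Filtration ℕ m0)
    (Δ : ℕ → Ω → ℝ)
    (hadapted : Adapted ℱ Δ)
    (hnonneg : ∀ t ω, 0 ≤ Δ t ω)
    (hint : ∀ t, Integrable (Δ t) ℙ)
    (J₀ ζ θ c : ℝ) (hJ₀ : 0 < J₀) (hζ0 : 0 < ζ) (hζ1 : ζ < 1)
    (hθ : 2 ≤ θ) (hc : 0 ≤ c) (hcJ : c ≤ θ * J₀)
    (A : ℕ → Set Ω)
    (hA : ∀ t, A t = {ω | ∀ s ≤ t, Δ s ω ≤ 10 * ζ⁻¹ * J₀})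
    (hΔ0 : ∀ᵐ ω ∂ℙ, Δ 0 ω ≤ J₀)
    (hrec : ∀ t : ℕ, ∀ᵐ ω ∂ℙ, ω ∈ A t →
      (ℙ[Δ (t + 1)|ℱ t]) ω ≤ (1 - 2 / ((t : ℝ) + θ)) * Δ t ω + c / ((t : ℝ) + θ) ^ 2) :
    ∀ T : ℕ, 1 ≤ T →
      (∫ ω in A T, Δ T ω ∂ℙ ≤ θ * J₀ / ((T : ℝ) + θ)) ∧
        ℙ ((A T)ᶜ) ≤ ENNReal.ofReal (3 / 10 * ζ) := by
  have hθ0 : (0:ℝ) < θ := lt_of_lt_of_le two_pos hθ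
  set M : ℝ := 10 * ζ⁻¹ * J₀ with hMdef
  have hζinv : (0:ℝ) < ζ⁻¹ := inv_pos.2 hζ0
  have hM : 0 < M := by positivity
  -- a `A` measurability
  have hmeasA : ∀ t, MeasurableSet[ℱ t] (A t) := by
    intro t
    rw [hA t]
    have : {ω | ∀ s ≤ t, Δ s ω ≤ M} = ⋂ s ∈ Set.Iic t, (Δ s) ⁻¹' (Set.Iic M) := by
      ext ω; simp [Set.mem_iInter]
    rw [this]
    refine MeasurableSet.biInter (Set.to_countable _) (fun s hs => ?_)
    exact ((hadapted s).mono (ℱ.mono hs) le_rfl) measurableSet_Iic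
  have hmeasA0 : ∀ t, MeasurableSet (A t) := fun t => ℱ.le t _ (hmeasA t)
  have hAdec : ∀ t, A (t + 1) ⊆ A t := by
    intro t ω hω
    rw [hA t]; rw [hA (t+1)] at hω
    exact fun s hs => hω s (hs.trans (Nat.le_succ t))
  -- the sequence e t
  set e : ℕ → ℝ := fun t => ∫ ω in A t, Δ t ω ∂ℙ with he
  have he_nonneg : ∀ t, 0 ≤ e t := fun t =>
    setIntegral_nonneg (hmeasA0 t) (fun ω _ => hnonneg t ω)
  have ha_pos : ∀ t : ℕ, (0:ℝ) < (t:ℝ) + θ := fun t => by positivity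
  have ha_two : ∀ t : ℕ, (2:ℝ) ≤ (t:ℝ) + θ := fun t => le_add_of_nonneg_of_le (Nat.cast_nonneg t) hθ
  -- key recursion step
  have hstep : ∀ t : ℕ, ∫ ω in A t, Δ (t+1) ω ∂ℙ ≤
      (1 - 2 / ((t:ℝ) + θ)) * e t + c / ((t:ℝ) + θ) ^ 2 := by
    intro t
    have h1 : ∫ ω in A t, Δ (t+1) ω ∂ℙ = ∫ ω in A t, (ℙ[Δ (t+1)|ℱ t]) ω ∂ℙ :=
      (setIntegral_condExp (ℱ.le t) (hint (t+1)) (hmeasA t)).symm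
    have hg_int : Integrable (fun ω => (1 - 2 / ((t:ℝ) + θ)) * Δ t ω + c / ((t:ℝ) + θ) ^ 2) ℙ :=
      ((hint t).const_mul _).add (integrable_const _)
    have h2 : ∫ ω in A t, (ℙ[Δ (t+1)|ℱ t]) ω ∂ℙ ≤
        ∫ ω in A t, ((1 - 2 / ((t:ℝ) + θ)) * Δ t ω + c / ((t:ℝ) + θ) ^ 2) ∂ℙ := by
      refine setIntegral_mono_ae_restrict integrable_condExp.integrableOn hg_int.integrableOn ?_
      exact (ae_restrict_iff' (hmeasA0 t)).2 (hrec t)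
    have h3 : ∫ ω in A t, ((1 - 2 / ((t:ℝ) + θ)) * Δ t ω + c / ((t:ℝ) + θ) ^ 2) ∂ℙ =
        (1 - 2 / ((t:ℝ) + θ)) * e t + c / ((t:ℝ) + θ) ^ 2 * (ℙ (A t)).toReal := by
      rw [integral_add (((hint t).const_mul _).integrableOn) (integrable_const _),
        setIntegral_const, smul_eq_mul]
      simp only [he, integral_const_mul, measureReal_def]
      ring
    have h4 : c / ((t:ℝ) + θ) ^ 2 * (ℙ (A t)).toReal ≤ c / ((t:ℝ) + θ) ^ 2 := by
      have h5 : (ℙ (A t)).toReal ≤ 1 := by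
        have := prob_le_one (μ := ℙ) (s := A t)
        simpa using ENNReal.toReal_mono (by simp) this
      have h6 : (0:ℝ) ≤ c / ((t:ℝ) + θ) ^ 2 := by positivity
      nlinarith [ENNReal.toReal_nonneg (a := ℙ (A t))]
    rw [h1]
    calc _ ≤ _ := h2
      _ = _ := h3
      _ ≤ _ := by linarith
  -- part (a) bound
  have hE0 : ∫ ω, Δ 0 ω ∂ℙ ≤ J₀ := by
    calc ∫ ω, Δ 0 ω ∂ℙ ≤ ∫ _ω, J₀ ∂ℙ := integral_mono_ae (hint 0) (integrable_const _) hΔ0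
      _ = J₀ := by simp
  have hbound : ∀ t : ℕ, e t ≤ θ * J₀ / ((t:ℝ) + θ) := by
    intro t
    induction t with
    | zero =>
      have h1 : e 0 ≤ ∫ ω, Δ 0 ω ∂ℙ :=
        setIntegral_le_integral (hint 0) (Filter.Eventually.of_forall (hnonneg 0))
      have h0 : θ * J₀ / (((0:ℕ):ℝ) + θ) = J₀ := by
        rw [Nat.cast_zero, zero_add]
        field_simp
      rw [h0]
      linarith
    | succ t ih =>
      have h1 : e (t+1) ≤ ∫ ω in A t, Δ (t+1) ω ∂ℙ :=
        setIntegral_mono_set (hint (t+1)).integrableOn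
          (Filter.Eventually.of_forall (fun ω => hnonneg (t+1) ω))
          (HasSubset.Subset.eventuallyLE (hAdec t))
      have h2 := hstep t
      set a : ℝ := (t:ℝ) + θ with hadef
      have ha2 : (2:ℝ) ≤ a := ha_two t
      have ha0 : (0:ℝ) < a := ha_pos t
      have hfac : (0:ℝ) ≤ 1 - 2 / a := by
        rw [sub_nonneg, div_le_one ha0]; exact ha2
      have h3 : (1 - 2 / a) * e t ≤ (1 - 2 / a) * (θ * J₀ / a) :=
        mul_le_mul_of_nonneg_left ih hfac
      have hcast : ((t+1 : ℕ):ℝ) + θ = a + 1 := by push_cast; ring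
      rw [hcast]
      have harith : (1 - 2 / a) * (θ * J₀ / a) + c / a ^ 2 ≤ θ * J₀ / (a + 1) := by
        have hcomb : (1 - 2 / a) * (θ * J₀ / a) + c / a ^ 2 = ((a - 2) * (θ * J₀) + c) / a ^ 2 := by
          field_simp
        rw [hcomb, div_le_div_iff₀ (by positivity) (by positivity)]
        nlinarith [mul_le_mul_of_nonneg_right hcJ (by linarith : (0:ℝ) ≤ a + 1),
          mul_pos hθ0 hJ₀, sq_nonneg a]
      linarith
  -- crude one-step bound
  have hg : ∀ s : ℕ, ∫ ω in A s, Δ (s+1) ω ∂ℙ ≤ e s + c / ((s:ℝ) + θ) ^ 2 := by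
    intro s
    have h := hstep s
    have h2 : (1 - 2 / ((s:ℝ) + θ)) * e s ≤ e s := by
      have := mul_nonneg (div_nonneg zero_le_two (ha_pos s).le) (he_nonneg s)
      nlinarith
    linarith
  -- Markov-type bound
  have hmarkov : ∀ (S : Set Ω) (t : ℕ), MeasurableSet S → (∀ ω ∈ S, M ≤ Δ t ω) →
      M * (ℙ S).toReal ≤ ∫ ω in S, Δ t ω ∂ℙ := fun S t hS hle =>
    by have := setIntegral_ge_of_const_le_real hS (measure_ne_top ℙ S) hle (hint t).integrableOn; rwa [measureReal_def] at this
  have hA0c : ∀ ω ∈ (A 0)ᶜ, M ≤ Δ 0 ω := by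
    intro ω hω
    rw [hA 0] at hω
    simp only [Set.mem_compl_iff, Set.mem_setOf_eq, not_forall] at hω
    obtain ⟨s, hs, h⟩ := hω
    have hs0 : s = 0 := Nat.le_zero.1 hs
    subst hs0
    exact (not_le.1 h).le
  have hdiffc : ∀ t : ℕ, ∀ ω ∈ A t \ A (t+1), M ≤ Δ (t+1) ω := by
    intro t ω hω
    obtain ⟨h1, h2⟩ := hω
    rw [hA t] at h1
    rw [hA (t+1)] at h2
    simp only [Set.mem_setOf_eq, not_forall] at h2
    obtain ⟨s, hs, h⟩ := h2
    rcases Nat.lt_or_ge s (t+1) with hlt | hge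
    · exact absurd (h1 s (Nat.lt_succ_iff.1 hlt)) h
    · have : s = t + 1 := le_antisymm hs hge
      subst this
      exact (not_le.1 h).le
  -- splitting the complement measures
  have hPsplit : ∀ t : ℕ, (ℙ ((A (t+1))ᶜ)).toReal
      = (ℙ ((A t)ᶜ)).toReal + (ℙ (A t \ A (t+1))).toReal := by
    intro t
    have hd : Disjoint ((A t)ᶜ) (A t \ A (t+1)) :=
      Set.disjoint_left.2 (fun ω h1 h2 => h1 h2.1)
    have hu : (A (t+1))ᶜ = (A t)ᶜ ∪ (A t \ A (t+1)) := by
      ext ω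
      constructor
      · intro h
        by_cases h1 : ω ∈ A t
        · exact Or.inr ⟨h1, h⟩
        · exact Or.inl h1
      · rintro (h | ⟨h1, h2⟩)
        · exact fun h' => h (hAdec t h')
        · exact h2
    rw [hu, measure_union hd ((hmeasA0 t).diff (hmeasA0 (t+1))),
      ENNReal.toReal_add (measure_ne_top _ _) (measure_ne_top _ _)]
  -- main telescoping estimate
  have hmain : ∀ t : ℕ, M * (ℙ ((A t)ᶜ)).toReal + e t ≤ (∫ ω, Δ 0 ω ∂ℙ) +
      ∑ s ∈ Finset.range t, c / ((s:ℝ) + θ) ^ 2 := by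
    intro t
    induction t with
    | zero =>
      simp only [Finset.range_zero, Finset.sum_empty, add_zero]
      have h1 := hmarkov ((A 0)ᶜ) 0 (hmeasA0 0).compl hA0c
      have h2 : ∫ ω in A 0, Δ 0 ω ∂ℙ + ∫ ω in (A 0)ᶜ, Δ 0 ω ∂ℙ = ∫ ω, Δ 0 ω ∂ℙ :=
        integral_add_compl (hmeasA0 0) (hint 0)
      have he0 : e 0 = ∫ ω in A 0, Δ 0 ω ∂ℙ := rfl
      linarith
    | succ t ih =>
      rw [Finset.sum_range_succ, hPsplit t]
      have h1 := hmarkov (A t \ A (t+1)) (t+1) ((hmeasA0 t).diff (hmeasA0 (t+1))) (hdiffc t)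
      have h2 : ∫ ω in A t \ A (t+1), Δ (t+1) ω ∂ℙ
          = (∫ ω in A t, Δ (t+1) ω ∂ℙ) - ∫ ω in A (t+1), Δ (t+1) ω ∂ℙ :=
        integral_diff (hmeasA0 (t+1)) (hint (t+1)).integrableOn (hAdec t)
      have h3 := hg t
      have he1 : e (t+1) = ∫ ω in A (t+1), Δ (t+1) ω ∂ℙ := rfl
      linarith
  -- bounding the sum
  have hsum : ∀ t : ℕ, ∑ s ∈ Finset.range t, c / ((s:ℝ) + θ) ^ 2 ≤ 2 * J₀ := by
    intro t
    have key : ∀ n : ℕ, ∑ s ∈ Finset.range n, (1:ℝ) / ((s:ℝ) + θ) ^ 2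
        ≤ 1 / (θ - 1) - 1 / ((n:ℝ) + θ - 1) := by
      intro n
      induction n with
      | zero => norm_num
      | succ n ih =>
        rw [Finset.sum_range_succ]
        have hn1 : (0:ℝ) < (n:ℝ) + θ - 1 := by
          have := Nat.cast_nonneg (α := ℝ) n; linarith
        have hn2 : (0:ℝ) < (n:ℝ) + θ := ha_pos n
        have hstep2 : (1:ℝ) / ((n:ℝ) + θ) ^ 2 ≤ 1 / ((n:ℝ) + θ - 1) - 1 / ((n:ℝ) + θ) := by
          rw [div_sub_div _ _ (ne_of_gt hn1) (ne_of_gt hn2),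
            div_le_div_iff₀ (by positivity) (by positivity)]
          nlinarith
        have hcast : ((n+1:ℕ):ℝ) + θ - 1 = (n:ℝ) + θ := by push_cast; ring
        rw [hcast]
        linarith
    have heq : ∑ s ∈ Finset.range t, c / ((s:ℝ) + θ) ^ 2
        = c * ∑ s ∈ Finset.range t, (1:ℝ) / ((s:ℝ) + θ) ^ 2 := by
      rw [Finset.mul_sum]
      exact Finset.sum_congr rfl (fun s _ => by rw [mul_one_div])
    rw [heq]
    have ht1 : (0:ℝ) < (t:ℝ) + θ - 1 := by
      have := Nat.cast_nonneg (α := ℝ) t; linarith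
    have h2 : ∑ s ∈ Finset.range t, (1:ℝ) / ((s:ℝ) + θ) ^ 2 ≤ 1 / (θ - 1) := by
      have hk := key t
      have hpos : (0:ℝ) ≤ 1 / ((t:ℝ) + θ - 1) := by positivity
      linarith
    calc c * ∑ s ∈ Finset.range t, (1:ℝ) / ((s:ℝ) + θ) ^ 2 ≤ c * (1 / (θ - 1)) :=
          mul_le_mul_of_nonneg_left h2 hc
      _ ≤ 2 * J₀ := by
          rw [mul_one_div, div_le_iff₀ (by linarith : (0:ℝ) < θ - 1)]
          nlinarith
  -- conclusion
  intro T hT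
  refine ⟨hbound T, ?_⟩
  have h1 := hmain T
  have h2 := hsum T
  have h3 : M * (ℙ ((A T)ᶜ)).toReal ≤ 3 * J₀ := by
    have h4 := he_nonneg T
    have h5 := hE0
    linarith
  have hMz : M * (3 / 10 * ζ) = 3 * J₀ := by
    rw [hMdef]
    field_simp
  have h4 : (ℙ ((A T)ᶜ)).toReal ≤ 3 / 10 * ζ :=
    le_of_mul_le_mul_left (by linarith) hM
  calc ℙ ((A T)ᶜ) = ENNReal.ofReal (ℙ ((A T)ᶜ)).toReal :=
        (ENNReal.ofReal_toReal (measure_ne_top _ _)).symm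
    _ ≤ _ := ENNReal.ofReal_le_ofReal h4
end

section
/- Let V ∈ ℝ^{n×n} be symmetric positive definite with positive semidefinite square root V^{1/2}, and let Z ∈ ℝ^{n×n} be any matrix. Then ‖V^{1/2}·exp(Z)·V^{1/2} − V‖ ≤ ‖V‖·e^{‖Z‖_F}·‖Z‖_F, where exp is the matrix exponential, ‖·‖ is the spectral norm, and ‖·‖_F is the Frobenius norm. (In particular, for symmetric Z, writing U := V^{1/2}exp(Z)V^{1/2} and δ(U,V) := ‖Z‖_F, this reads ‖U − V‖ ≤ ‖V‖·e^{δ(U,V)}·δ(U,V).) -/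
open Matrix BigOperators MeasureTheory

section AuxLemmas
open scoped Nat
set_option maxHeartbeats 1000000

/-- In any real Banach algebra, `‖exp x - 1‖ ≤ e^{‖x‖} - 1`. -/
lemma my_norm_exp_sub_one_le {𝔸 : Type*} [NormedRing 𝔸] [NormedAlgebra ℝ 𝔸]
    [CompleteSpace 𝔸] (x : 𝔸) :
    ‖NormedSpace.exp x - 1‖ ≤ Real.exp ‖x‖ - 1 := by
  have hsum : Summable fun n : ℕ => ((n ! : ℝ))⁻¹ • x ^ n := NormedSpace.expSeries_summable' x
  have hns : Summable fun n : ℕ => ‖((n ! : ℝ))⁻¹ • x ^ n‖ := NormedSpace.norm_expSeries_summable' x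
  have hsum1 : Summable fun n : ℕ => (((n+1)! : ℝ))⁻¹ • x ^ (n+1) :=
    (summable_nat_add_iff 1).2 hsum
  have hns1 : Summable fun n : ℕ => ‖(((n+1)! : ℝ))⁻¹ • x ^ (n+1)‖ :=
    (summable_nat_add_iff 1).2 hns
  have hgs : Summable fun n : ℕ => ‖x‖ ^ (n+1) / ((n+1)! : ℝ) :=
    (summable_nat_add_iff 1).2 (Real.summable_pow_div_factorial ‖x‖)
  have hexp : NormedSpace.exp x = 1 + ∑' n : ℕ, (((n+1)! : ℝ))⁻¹ • x ^ (n+1) := by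
    rw [NormedSpace.exp_eq_tsum ℝ]
    beta_reduce
    rw [Summable.tsum_eq_zero_add hsum]
    simp
  have hrexp : Real.exp ‖x‖ = 1 + ∑' n : ℕ, ‖x‖ ^ (n+1) / ((n+1)! : ℝ) := by
    rw [Real.exp_eq_exp_ℝ, NormedSpace.exp_eq_tsum_div]
    beta_reduce
    rw [Summable.tsum_eq_zero_add (NormedSpace.expSeries_div_summable ‖x‖)]
    simp
  rw [hexp, hrexp, add_sub_cancel_left, add_sub_cancel_left]
  calc ‖∑' n : ℕ, (((n+1)! : ℝ))⁻¹ • x ^ (n+1)‖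
      ≤ ∑' n : ℕ, ‖(((n+1)! : ℝ))⁻¹ • x ^ (n+1)‖ := norm_tsum_le_tsum_norm hns1
    _ ≤ ∑' n : ℕ, ‖x‖ ^ (n+1) / ((n+1)! : ℝ) := by
        refine Summable.tsum_le_tsum (fun n => ?_) hns1 hgs
        rw [norm_smul, norm_inv, Real.norm_natCast, div_eq_inv_mul]
        exact mul_le_mul_of_nonneg_left (norm_pow_le' x (Nat.succ_pos n)) (by positivity)
    _ = _ := rfl

/-- `e^t - 1 ≤ t * e^t` for `t ≥ 0`. -/
lemma my_exp_sub_one_le (t : ℝ) (ht : 0 ≤ t) : Real.exp t - 1 ≤ t * Real.exp t := by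
  have h1 : (-t) + 1 ≤ Real.exp (-t) := Real.add_one_le_exp (-t)
  have h2 : Real.exp (-t) * Real.exp t = 1 := by rw [← Real.exp_add]; simp
  nlinarith [Real.exp_pos t]

/-- Spectral norm is at most the Frobenius norm. -/
lemma my_sNorm_le_fNorm {m n : ℕ} (M : Matrix (Fin m) (Fin n) ℝ) : sNorm M ≤ fNorm M := by
  rw [sNorm]
  refine ContinuousLinearMap.opNorm_le_bound _ (Real.sqrt_nonneg _) (fun x => ?_)
  have hx : ‖x‖ = Real.sqrt (∑ j, (x j) ^ 2) := by
    rw [EuclideanSpace.norm_eq]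
    congr 1
    refine Finset.sum_congr rfl (fun j _ => ?_)
    rw [Real.norm_eq_abs, sq_abs]
  have happ : ‖(LinearMap.toContinuousLinearMap (Matrix.toEuclideanLin M)) x‖
      = Real.sqrt (∑ i, (∑ j, M i j * x j) ^ 2) := by
    rw [LinearMap.coe_toContinuousLinearMap', Matrix.toEuclideanLin_apply,
      EuclideanSpace.norm_eq]
    congr 1
    refine Finset.sum_congr rfl (fun i _ => ?_)
    rw [Real.norm_eq_abs, sq_abs]
    rfl
  rw [happ, hx, fNorm, ← Real.sqrt_mul (by positivity)]
  apply Real.sqrt_le_sqrt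
  calc ∑ i, (∑ j, M i j * x j) ^ 2
      ≤ ∑ i, (∑ j, (M i j) ^ 2) * (∑ j, (x j) ^ 2) :=
        Finset.sum_le_sum fun i _ =>
          Finset.sum_mul_sq_le_sq_mul_sq Finset.univ (fun j => M i j) (fun j => x j)
    _ = (∑ i, ∑ j, (M i j) ^ 2) * (∑ j, (x j) ^ 2) := by rw [Finset.sum_mul]

section L2
open scoped Matrix.Norms.L2Operator

lemma my_sNorm_eq_l2 {m n : ℕ} (M : Matrix (Fin m) (Fin n) ℝ) : sNorm M = ‖M‖ := rfl

lemma my_key {n : ℕ} (V S Z : Matrix (Fin n) (Fin n) ℝ)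
    (hV : V.PosDef) (hS : S.PosSemidef) (hSV : S * S = V) :
    sNorm (S * NormedSpace.exp Z * S - V)
      ≤ sNorm V * Real.exp (fNorm Z) * fNorm Z := by
  set E := NormedSpace.exp Z with hEdef
  have hfZ : (0:ℝ) ≤ fNorm Z := Real.sqrt_nonneg _
  have hZle : sNorm Z ≤ fNorm Z := my_sNorm_le_fNorm Z
  have hZ0 : (0:ℝ) ≤ sNorm Z := by rw [sNorm]; exact norm_nonneg _
  have hrw : S * E * S - V = S * (E - 1) * S := by
    rw [← hSV]; noncomm_ring
  have hSS : ‖S‖ * ‖S‖ = ‖V‖ := by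
    have h := Matrix.l2_opNorm_conjTranspose_mul_self S
    rw [hS.1, hSV] at h
    exact h.symm
  have hE1 : ‖E - 1‖ ≤ Real.exp ‖Z‖ - 1 := my_norm_exp_sub_one_le Z
  have hchain : ‖E - 1‖ ≤ fNorm Z * Real.exp (fNorm Z) := by
    refine hE1.trans ((my_exp_sub_one_le ‖Z‖ (norm_nonneg _)).trans ?_)
    have hZle' : ‖Z‖ ≤ fNorm Z := by rw [← my_sNorm_eq_l2]; exact hZle
    exact mul_le_mul hZle' (Real.exp_le_exp.2 hZle') (Real.exp_pos _).le hfZ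
  rw [my_sNorm_eq_l2, my_sNorm_eq_l2, hrw]
  calc ‖S * (E - 1) * S‖
      ≤ ‖S * (E - 1)‖ * ‖S‖ := Matrix.l2_opNorm_mul _ _
    _ ≤ (‖S‖ * ‖E - 1‖) * ‖S‖ :=
        mul_le_mul_of_nonneg_right (Matrix.l2_opNorm_mul _ _) (norm_nonneg _)
    _ = (‖S‖ * ‖S‖) * ‖E - 1‖ := by ring
    _ = ‖V‖ * ‖E - 1‖ := by rw [hSS]
    _ ≤ ‖V‖ * (fNorm Z * Real.exp (fNorm Z)) :=
        mul_le_mul_of_nonneg_left hchain (norm_nonneg _)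
    _ = ‖V‖ * Real.exp (fNorm Z) * fNorm Z := by ring

end L2

end AuxLemmas

/-- Key estimate in Lemma `delta_upper_lower`:
for positive definite `V` with psd square root `S` (so `U = S·exp(Z)·S`),
`‖S·exp(Z)·S − V‖ ≤ ‖V‖·e^{‖Z‖_F}·‖Z‖_F`. -/
theorem exp_conj_sub_norm_bound {n : ℕ} (V S Z : Matrix (Fin n) (Fin n) ℝ)
    (hV : V.PosDef) (hS : S.PosSemidef) (hSV : S * S = V) :
    sNorm (S * NormedSpace.exp Z * S - V)
      ≤ sNorm V * Real.exp (fNorm Z) * fNorm Z := by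
  exact my_key V S Z hV hS hSV
end
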